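/- Let s ≥ 1, m ≥ 0, and n = 8s + 1 + 2m ≥ 9. Define vectors in F₄ⁿ: for i = 1,…,2s let rᵢ have entry 1 in coordinates 4(i−1)+1,…,4i and 0 elsewhere, and let r_{2s+1} consist of the block D = (0,1,ω,ω²) repeated 2s times followed by 2m+1 entries equal to 1. Let C be the F₄-span of r₁,…,r_{2s+1}. Then: (i) dim_{F₄} C = 2s+1 and the minimum Hamming weight of C is 4; (ii) the trace radical R = C ∩ C^{⊥t} equals the F₄-span of r₁,…,r_{2s}, so dim_{F₂} R = 4s; and (iii) every element of C \ R (there are 3·4^{2s} of them) has Hamming weight exactly n − 2s. (Hence C normalizes an [[n, 1, n−2s; n−4s−1]] EAQECC saturating the EA-Singleton bound.) -/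

import Mathlib

noncomputable section

abbrev F2 : Type := ZMod 2
abbrev F4 : Type := GaloisField 2 2

/-- The trace inner product `(u, v)ₜ = Σⱼ (uⱼ vⱼ² + uⱼ² vⱼ)` on `F₄ⁿ`. -/
def trInner {n : ℕ} (u v : Fin n → F4) : F4 :=
  ∑ j, (u j * (v j) ^ 2 + (u j) ^ 2 * v j)

/-- The Hamming weight of `u ∈ F₄ⁿ`: the number of nonzero coordinates. -/
def wt {n : ℕ} (u : Fin n → F4) : ℕ := Set.ncard {i | u i ≠ 0}

/-- The trace dual `C^{⊥t} = {u ∈ F₄ⁿ | ∀ v ∈ C, (u, v)ₜ = 0}` of a set `C ⊆ F₄ⁿ`,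
as an `F₂`-subspace of `F₄ⁿ`. -/
def trDualSub {n : ℕ} (C : Set (Fin n → F4)) : Submodule F2 (Fin n → F4) where
  carrier := {u | ∀ v ∈ C, trInner u v = 0}
  zero_mem' := by intro v hv; simp [trInner]
  add_mem' := by
    intro a b ha hb v hv
    have h : trInner (a + b) v = trInner a v + trInner b v := by
      simp only [trInner, Pi.add_apply]
      rw [← Finset.sum_add_distrib]
      refine Finset.sum_congr rfl ?_
      intro j _
      have h2 : (2 : F4) = 0 := CharTwo.two_eq_zero
      linear_combination (a j * b j * v j) * h2
    rw [h, ha v hv, hb v hv, add_zero]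
  smul_mem' := by
    intro c a ha v hv
    have hc : (algebraMap F2 F4 c) ^ 2 = algebraMap F2 F4 c := by
      have h2 : c ^ 2 = c := by revert c; decide
      rw [← map_pow, h2]
    have h : trInner (c • a) v = algebraMap F2 F4 c * trInner a v := by
      simp only [trInner, Pi.smul_apply, Algebra.smul_def, Finset.mul_sum]
      refine Finset.sum_congr rfl ?_
      intro j _
      rw [mul_pow, hc]; ring
    rw [h, ha v hv, mul_zero]

open Finset


lemma wt_eq_filter {n : ℕ} (u : Fin n → F4) [DecidablePred fun i => u i ≠ 0] :
    wt u = (Finset.univ.filter fun i => u i ≠ 0).card := by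
  classical
  rw [wt, ← Nat.card_coe_set_eq, Nat.card_eq_fintype_card]
  simp [Fintype.card_subtype]

section om
variable (ω : F4) (hω : ω ^ 2 + ω + 1 = 0)

lemma h2F4 : (2 : F4) = 0 := CharTwo.two_eq_zero

include hω

lemma om_ne0 : ω ≠ 0 := by intro h; rw [h] at hω; simpa using hω
lemma om_ne1 : ω ≠ 1 := by
  intro h; rw [h] at hω
  exact one_ne_zero (α := F4) (by linear_combination hω - h2F4)
lemma omsq_ne0 : ω ^ 2 ≠ 0 := by
  intro h; exact om_ne0 ω hω (pow_eq_zero_iff (n := 2) (by norm_num) |>.mp h)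
lemma omsq_ne1 : ω ^ 2 ≠ 1 := by
  intro h; exact om_ne0 ω hω (by linear_combination hω - h - h2F4)
lemma omsq_neom : ω ^ 2 ≠ ω := by
  intro h; exact one_ne_zero (α := F4) (by linear_combination hω - h - ω * h2F4)

lemma F4cases (x : F4) : x = 0 ∨ x = 1 ∨ x = ω ∨ x = ω ^ 2 := by
  classical
  letI : Fintype F4 := Fintype.ofFinite F4
  have hc : Fintype.card F4 = 4 := by
    rw [← Nat.card_eq_fintype_card]; exact GaloisField.card 2 2 (by norm_num)
  have hcard : ({0, 1, ω, ω ^ 2} : Finset F4).card = 4 := by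
    rw [card_insert_of_notMem (by simp [(om_ne0 ω hω).symm, (omsq_ne0 ω hω).symm]),
      card_insert_of_notMem (by simp [(om_ne1 ω hω).symm, (omsq_ne1 ω hω).symm]),
      card_insert_of_notMem (by simp [(omsq_neom ω hω).symm]), card_singleton]
  have huniv : ({0, 1, ω, ω ^ 2} : Finset F4) = Finset.univ :=
    Finset.eq_univ_of_card _ (hcard.trans hc.symm)
  have : x ∈ ({0, 1, ω, ω ^ 2} : Finset F4) := huniv ▸ Finset.mem_univ x
  simpa using this
end om

def Dv (ω : F4) (k : ℕ) : F4 :=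
  if k = 0 then 0 else if k = 1 then 1 else if k = 2 then ω else ω ^ 2

def cext {N : ℕ} (c : Fin N → F4) (k : ℕ) : F4 := if h : k < N then c ⟨k, h⟩ else 0

def vfun (ω : F4) {s : ℕ} (c : Fin (2 * s + 1) → F4) (k : ℕ) : F4 :=
  if k < 8 * s then cext c (k / 4) + c (Fin.last (2 * s)) * Dv ω (k % 4)
  else c (Fin.last (2 * s))

lemma sum4 (f : ℕ → F4) (N : ℕ) :
    ∑ k ∈ range (4 * N), f k
      = ∑ i ∈ range N, (f (4 * i) + f (4 * i + 1) + f (4 * i + 2) + f (4 * i + 3)) := by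
  induction N with
  | zero => simp
  | succ N ih =>
    rw [show 4 * (N + 1) = 4 * N + 4 by ring, Finset.sum_range_add, ih,
      Finset.sum_range_succ]
    congr 1
    simp [Finset.sum_range_succ]
    try ring


lemma eval_sum (s n : ℕ) (hsn : 8 * s < n) (ω : F4)
    (r : Fin (2 * s + 1) → Fin n → F4)
    (hr : ∀ i : Fin (2 * s + 1), (i : ℕ) < 2 * s →
      r i = fun j : Fin n => if (j : ℕ) / 4 = (i : ℕ) then 1 else 0)
    (hrlast : ∀ i : Fin (2 * s + 1), (i : ℕ) = 2 * s →
      r i = fun j : Fin n => if (j : ℕ) < 8 * s then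
        (if (j : ℕ) % 4 = 0 then 0 else if (j : ℕ) % 4 = 1 then 1 else
         if (j : ℕ) % 4 = 2 then ω else ω ^ 2)
        else 1)
    (c : Fin (2 * s + 1) → F4) (j : Fin n) :
    (∑ i, c i • r i) j = vfun ω c (j : ℕ) := by
  classical
  simp only [Finset.sum_apply, Pi.smul_apply, smul_eq_mul]
  rw [Fin.sum_univ_castSucc]
  have hlast := hrlast (Fin.last (2 * s)) (by simp)
  have hterm : ∀ i : Fin (2 * s),
      c i.castSucc * r i.castSucc j = if (j : ℕ) / 4 = (i : ℕ) then c i.castSucc else 0 := by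
    intro i
    rw [hr i.castSucc (by simpa using i.isLt)]
    simp only [Fin.coe_castSucc]
    split <;> simp
  rw [Finset.sum_congr rfl (fun i _ => hterm i)]
  simp only [hlast]
  by_cases h : (j : ℕ) < 8 * s
  · have hj4 : (j : ℕ) / 4 < 2 * s := by omega
    rw [Finset.sum_eq_single (⟨(j : ℕ) / 4, hj4⟩ : Fin (2 * s))]
    · rw [if_pos rfl, vfun, if_pos h, cext, dif_pos (show (j : ℕ) / 4 < 2 * s + 1 by omega), if_pos h]
      rfl
    · intro b _ hb
      rw [if_neg]
      intro hdiv
      exact hb (Fin.ext hdiv.symm)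
    · intro hmem; exact absurd (Finset.mem_univ _) hmem
  · rw [if_neg h, vfun, if_neg h, mul_one]
    rw [Finset.sum_eq_zero, zero_add]
    intro i _
    rw [if_neg]
    have : (i : ℕ) < 2 * s := i.isLt
    omega

lemma trInner_formula (s m n : ℕ) (hn : n = 8 * s + 1 + 2 * m) (ω : F4)
    (hω : ω ^ 2 + ω + 1 = 0)
    (r : Fin (2 * s + 1) → Fin n → F4)
    (hr : ∀ i : Fin (2 * s + 1), (i : ℕ) < 2 * s →
      r i = fun j : Fin n => if (j : ℕ) / 4 = (i : ℕ) then 1 else 0)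
    (hrlast : ∀ i : Fin (2 * s + 1), (i : ℕ) = 2 * s →
      r i = fun j : Fin n => if (j : ℕ) < 8 * s then
        (if (j : ℕ) % 4 = 0 then 0 else if (j : ℕ) % 4 = 1 then 1 else
         if (j : ℕ) % 4 = 2 then ω else ω ^ 2)
        else 1)
    (c d : Fin (2 * s + 1) → F4) :
    trInner (∑ i, c i • r i) (∑ i, d i • r i)
      = c (Fin.last (2 * s)) * (d (Fin.last (2 * s))) ^ 2
        + (c (Fin.last (2 * s))) ^ 2 * d (Fin.last (2 * s)) := by
  have hsn : 8 * s < n := by omega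
  have h2 : (2 : F4) = 0 := h2F4
  set b := c (Fin.last (2 * s)) with hb
  set b' := d (Fin.last (2 * s)) with hb'
  set g : ℕ → F4 := fun k => vfun ω c k * (vfun ω d k) ^ 2 + (vfun ω c k) ^ 2 * vfun ω d k
    with hg
  have hT : trInner (∑ i, c i • r i) (∑ i, d i • r i) = ∑ j : Fin n, g (j : ℕ) := by
    rw [trInner]
    refine Finset.sum_congr rfl fun j _ => ?_
    rw [eval_sum s n hsn ω r hr hrlast c j, eval_sum s n hsn ω r hr hrlast d j]
  rw [hT, Fin.sum_univ_eq_sum_range g n,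
    show n = 4 * (2 * s) + (2 * m + 1) by omega, Finset.sum_range_add, sum4]
  have htail : ∀ x ∈ range (2 * m + 1), g (4 * (2 * s) + x) = b * b' ^ 2 + b ^ 2 * b' := by
    intro x _
    rw [hg]
    simp only []
    rw [vfun, if_neg (by omega), vfun, if_neg (by omega)]
  have hblock : ∀ i ∈ range (2 * s),
      (g (4 * i) + g (4 * i + 1) + g (4 * i + 2) + g (4 * i + 3))
        = b * b' ^ 2 + b ^ 2 * b' := by
    intro i hi
    rw [mem_range] at hi
    rw [hg]
    simp only []
    rw [vfun, if_pos (by omega), vfun, if_pos (by omega), vfun, if_pos (by omega),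
      vfun, if_pos (by omega), vfun, if_pos (by omega), vfun, if_pos (by omega),
      vfun, if_pos (by omega), vfun, if_pos (by omega)]
    rw [show (4 * i) / 4 = i by omega, show (4 * i + 1) / 4 = i by omega,
      show (4 * i + 2) / 4 = i by omega, show (4 * i + 3) / 4 = i by omega,
      show (4 * i) % 4 = 0 by omega, show (4 * i + 1) % 4 = 1 by omega,
      show (4 * i + 2) % 4 = 2 by omega, show (4 * i + 3) % 4 = 3 by omega]
    set a := cext c i
    set ap := cext d i
    simp only [Dv]
    norm_num
    linear_combination (-2*b*b'^2 + 2*b*b'^2*ω - b*b'^2*ω^3 + b*b'^2*ω^4 - 2*b^2*b'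
      + 2*b^2*b'*ω - b^2*b'*ω^3 + b^2*b'*ω^4 + 2*ap*b*b' - 2*ap*b*b'*ω + 2*ap*b*b'*ω^2
      + ap*b^2 - ap*b^2*ω + ap*b^2*ω^2 + ap^2*b + a*b'^2 - a*b'^2*ω + a*b'^2*ω^2
      + 2*a*b*b' - 2*a*b*b'*ω + 2*a*b*b'*ω^2 + 2*a*ap*b' + 2*a*ap*b + a^2*b') * hω
      + (b*b'^2 + b^2*b' + 2*a*ap^2 + 2*a^2*ap) * h2
  rw [Finset.sum_congr rfl hblock, Finset.sum_congr rfl htail, Finset.sum_const,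
    Finset.sum_const, Finset.card_range, Finset.card_range, nsmul_eq_mul, nsmul_eq_mul]
  push_cast
  linear_combination ((s : F4) * (b * b' ^ 2 + b ^ 2 * b') + (m : F4) * (b * b' ^ 2 + b ^ 2 * b')) * h2

open scoped Classical in
def k0 (ω : F4) (x : F4) : ℕ :=
  if x = 0 then 0 else if x = 1 then 1 else if x = ω then 2 else 3

lemma k0_lt (ω x : F4) : k0 ω x < 4 := by
  rw [k0]; split
  · norm_num
  · split
    · norm_num
    · split <;> norm_num

lemma Dv_k0 (ω : F4) (hω : ω ^ 2 + ω + 1 = 0) (x : F4) : Dv ω (k0 ω x) = x := by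
  have h0 := om_ne0 ω hω
  have h1 := om_ne1 ω hω
  have h2 := omsq_ne0 ω hω
  have h3 := omsq_ne1 ω hω
  have h4 := omsq_neom ω hω
  rcases F4cases ω hω x with h | h | h | h <;> rw [h] <;>
    simp [k0, Dv, h0, h1, h2, h3, h4]

lemma k0_Dv (ω : F4) (hω : ω ^ 2 + ω + 1 = 0) (k : ℕ) (hk : k < 4) :
    k0 ω (Dv ω k) = k := by
  have h0 := om_ne0 ω hω
  have h1 := om_ne1 ω hω
  have h2 := omsq_ne0 ω hω
  have h3 := omsq_ne1 ω hω
  have h4 := omsq_neom ω hω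
  interval_cases k <;> simp [k0, Dv, h0, h1, h2, h3, h4]

lemma Dv_inj (ω : F4) (hω : ω ^ 2 + ω + 1 = 0) (k l : ℕ) (hk : k < 4) (hl : l < 4)
    (h : Dv ω k = Dv ω l) : k = l := by
  rw [← k0_Dv ω hω k hk, ← k0_Dv ω hω l hl, h]

lemma wt_blast_ne (s m n : ℕ) (hn : n = 8 * s + 1 + 2 * m) (ω : F4)
    (hω : ω ^ 2 + ω + 1 = 0)
    (r : Fin (2 * s + 1) → Fin n → F4)
    (hr : ∀ i : Fin (2 * s + 1), (i : ℕ) < 2 * s →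
      r i = fun j : Fin n => if (j : ℕ) / 4 = (i : ℕ) then 1 else 0)
    (hrlast : ∀ i : Fin (2 * s + 1), (i : ℕ) = 2 * s →
      r i = fun j : Fin n => if (j : ℕ) < 8 * s then
        (if (j : ℕ) % 4 = 0 then 0 else if (j : ℕ) % 4 = 1 then 1 else
         if (j : ℕ) % 4 = 2 then ω else ω ^ 2)
        else 1)
    (c : Fin (2 * s + 1) → F4) (hbne : c (Fin.last (2 * s)) ≠ 0) :
    wt (∑ i, c i • r i) = n - 2 * s := by
  classical
  have hsn : 8 * s < n := by omega
  have h2 : (2 : F4) = 0 := h2F4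
  set b := c (Fin.last (2 * s)) with hbdef
  set v := ∑ i, c i • r i with hv
  have hev : ∀ j : Fin n, v j = vfun ω c (j : ℕ) :=
    fun j => eval_sum s n hsn ω r hr hrlast c j
  have hlt : ∀ j : Fin n, v j = 0 → (j : ℕ) < 8 * s := by
    intro j hj0
    by_contra hge
    rw [hev j, vfun, if_neg hge] at hj0
    exact hbne hj0
  have hzero : (Finset.univ.filter fun j : Fin n => v j = 0).card = 2 * s := by
    rw [show 2 * s = (Finset.range (2 * s)).card from (Finset.card_range _).symm]
    apply Finset.card_bij (fun (j : Fin n) _ => (j : ℕ) / 4)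
    · intro j hj
      rw [Finset.mem_filter] at hj
      have := hlt j hj.2
      rw [Finset.mem_range]; omega
    · intro j1 hj1 j2 hj2 hdiv
      rw [Finset.mem_filter] at hj1 hj2
      have hl1 := hlt j1 hj1.2
      have hl2 := hlt j2 hj2.2
      have e1 := hj1.2
      have e2 := hj2.2
      rw [hev j1, vfun, if_pos hl1] at e1
      rw [hev j2, vfun, if_pos hl2] at e2
      rw [hdiv] at e1
      have hDeq : b * Dv ω ((j1 : ℕ) % 4) = b * Dv ω ((j2 : ℕ) % 4) := by
        linear_combination e1 - e2
      have := Dv_inj ω hω _ _ (Nat.mod_lt _ (by norm_num)) (Nat.mod_lt _ (by norm_num))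
        (mul_left_cancel₀ hbne hDeq)
      exact Fin.ext (by omega)
    · intro i hi
      rw [Finset.mem_range] at hi
      set a := cext c i with hadef
      set k := k0 ω (a * b⁻¹) with hkdef
      have hk4 : k < 4 := k0_lt ω _
      have hjn : 4 * i + k < n := by omega
      refine ⟨⟨4 * i + k, hjn⟩, ?_, ?_⟩
      · rw [Finset.mem_filter]
        refine ⟨Finset.mem_univ _, ?_⟩
        rw [hev, vfun]
        rw [show ((⟨4 * i + k, hjn⟩ : Fin n) : ℕ) = 4 * i + k from rfl]
        rw [if_pos (by omega), show (4 * i + k) / 4 = i by omega,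
          show (4 * i + k) % 4 = k by omega, hkdef, Dv_k0 ω hω, ← hadef, ← hbdef]
        have hbb : b * (a * b⁻¹) = a := by field_simp
        rw [hbb]
        linear_combination a * h2
      · rw [show ((⟨4 * i + k, hjn⟩ : Fin n) : ℕ) = 4 * i + k from rfl]
        omega
  have htotal := Finset.card_filter_add_card_filter_not
    (s := (Finset.univ : Finset (Fin n))) (p := fun j => v j = 0)
  simp only [Finset.card_univ, Fintype.card_fin] at htotal
  have hwt : wt v = (Finset.univ.filter fun j : Fin n => ¬ v j = 0).card := by
    rw [wt_eq_filter]
  omega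

lemma card_four_block {n : ℕ} (i : ℕ) (h : 4 * i + 3 < n) :
    ({⟨4 * i, by omega⟩, ⟨4 * i + 1, by omega⟩, ⟨4 * i + 2, by omega⟩,
      ⟨4 * i + 3, by omega⟩} : Finset (Fin n)).card = 4 := by
  rw [Finset.card_insert_of_notMem (by simp [Fin.ext_iff]),
    Finset.card_insert_of_notMem (by simp [Fin.ext_iff]),
    Finset.card_insert_of_notMem (by simp [Fin.ext_iff]), Finset.card_singleton]

lemma wt_blast_zero (s m n : ℕ) (hn : n = 8 * s + 1 + 2 * m) (ω : F4)
    (r : Fin (2 * s + 1) → Fin n → F4)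
    (hr : ∀ i : Fin (2 * s + 1), (i : ℕ) < 2 * s →
      r i = fun j : Fin n => if (j : ℕ) / 4 = (i : ℕ) then 1 else 0)
    (hrlast : ∀ i : Fin (2 * s + 1), (i : ℕ) = 2 * s →
      r i = fun j : Fin n => if (j : ℕ) < 8 * s then
        (if (j : ℕ) % 4 = 0 then 0 else if (j : ℕ) % 4 = 1 then 1 else
         if (j : ℕ) % 4 = 2 then ω else ω ^ 2)
        else 1)
    (c : Fin (2 * s + 1) → F4) (hb0 : c (Fin.last (2 * s)) = 0)
    (hne : (∑ i, c i • r i) ≠ 0) : 4 ≤ wt (∑ i, c i • r i) := by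
  classical
  have hsn : 8 * s < n := by omega
  set v := ∑ i, c i • r i with hv
  have hev : ∀ j : Fin n, v j = vfun ω c (j : ℕ) :=
    fun j => eval_sum s n hsn ω r hr hrlast c j
  obtain ⟨j, hj⟩ := Function.ne_iff.mp hne
  have hj8 : (j : ℕ) < 8 * s := by
    by_contra hge
    exact hj (by rw [hev j, vfun, if_neg hge, hb0]; rfl)
  set i := (j : ℕ) / 4 with hidef
  have hi2 : i < 2 * s := by omega
  have ha : cext c i ≠ 0 := by
    intro h0
    apply hj
    rw [hev j, vfun, if_pos hj8, ← hidef, h0, hb0]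
    simp
  have key : ∀ t : ℕ, t < 4 → ∀ (hjt : 4 * i + t < n), v ⟨4 * i + t, hjt⟩ ≠ 0 := by
    intro t ht hjt
    rw [hev, vfun, show ((⟨4 * i + t, hjt⟩ : Fin n) : ℕ) = 4 * i + t from rfl,
      if_pos (by omega), show (4 * i + t) / 4 = i by omega, hb0]
    simpa using ha
  rw [wt_eq_filter]
  have h3n : 4 * i + 3 < n := by omega
  have hsub : ({⟨4 * i, by omega⟩, ⟨4 * i + 1, by omega⟩, ⟨4 * i + 2, by omega⟩,
      ⟨4 * i + 3, by omega⟩} : Finset (Fin n)) ⊆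
      Finset.univ.filter fun j : Fin n => v j ≠ 0 := by
    intro x hx
    simp only [Finset.mem_insert, Finset.mem_singleton] at hx
    rw [Finset.mem_filter]
    refine ⟨Finset.mem_univ _, ?_⟩
    rcases hx with h | h | h | h <;> rw [h]
    · exact key 0 (by norm_num) _
    · exact key 1 (by norm_num) _
    · exact key 2 (by norm_num) _
    · exact key 3 (by norm_num) _
  calc 4 = ({⟨4 * i, by omega⟩, ⟨4 * i + 1, by omega⟩, ⟨4 * i + 2, by omega⟩,
      ⟨4 * i + 3, by omega⟩} : Finset (Fin n)).card := (card_four_block i h3n).symm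
    _ ≤ _ := Finset.card_le_card hsub

lemma wt_r0 (s m n : ℕ) (hn : n = 8 * s + 1 + 2 * m) (hs : 1 ≤ s) (ω : F4)
    (r : Fin (2 * s + 1) → Fin n → F4)
    (hr : ∀ i : Fin (2 * s + 1), (i : ℕ) < 2 * s →
      r i = fun j : Fin n => if (j : ℕ) / 4 = (i : ℕ) then 1 else 0) :
    wt (r ⟨0, by omega⟩) = 4 ∧ r ⟨0, by omega⟩ ≠ 0 := by
  classical
  have h0 : ((⟨0, by omega⟩ : Fin (2 * s + 1)) : ℕ) < 2 * s := by simp; omega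
  rw [hr _ h0]
  constructor
  · rw [wt_eq_filter]
    have : (Finset.univ.filter fun j : Fin n =>
        (fun j : Fin n => if (j : ℕ) / 4 = ((⟨0, by omega⟩ : Fin (2 * s + 1)) : ℕ)
          then (1 : F4) else 0) j ≠ 0) =
        ({⟨0, by omega⟩, ⟨1, by omega⟩, ⟨2, by omega⟩, ⟨3, by omega⟩} : Finset (Fin n)) := by
      ext x
      simp only [Finset.mem_filter, Finset.mem_univ, true_and, Finset.mem_insert,
        Finset.mem_singleton, Fin.ext_iff]
      constructor
      · intro hx
        by_cases hc : (x : ℕ) / 4 = ((⟨0, by omega⟩ : Fin (2 * s + 1)) : ℕ)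
        · simp only [show ((⟨0, by omega⟩ : Fin (2 * s + 1)) : ℕ) = 0 from rfl] at hc
          show (x : ℕ) = 0 ∨ (x : ℕ) = 1 ∨ (x : ℕ) = 2 ∨ (x : ℕ) = 3
          omega
        · rw [if_neg hc] at hx; exact absurd rfl hx
      · intro hx
        have hx4 : (x : ℕ) / 4 = 0 := by
          rcases hx with h | h | h | h <;> rw [show (x:ℕ) = _ from h] <;> norm_num
        rw [if_pos (by rw [hx4])]
        exact one_ne_zero
    rw [this]
    have : (4 : ℕ) * 0 + 3 < n := by omega
    have h4 := card_four_block (n := n) 0 this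
    simpa using h4
  · intro hcon
    have := congrFun hcon ⟨0, by omega⟩
    rw [if_pos (by norm_num)] at this
    exact one_ne_zero this

/-- for `s ≥ 1` and `n = 8s + 1 + 2m`, the `F₄`-linear code `C` spanned by the
`2s` disjoint block rows `rᵢ = (0,…,0,1,1,1,1,0,…,0)` together with the row
`(D, D, …, D, 1, …, 1)` where `D = (0, 1, ω, ω²)` is repeated `2s` times, has
`dim_{F₄} C = 2s + 1` and minimum weight 4, its trace radical `R = C ∩ C^{⊥t}` is the
`F₄`-span of the first `2s` rows (so `dim_{F₂} R = 4s`), and all `3·4^{2s}` elements of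
`C \ R` have Hamming weight exactly `n - 2s`. -/
theorem stmt11 (s m n : ℕ) (hs : 1 ≤ s) (hn : n = 8 * s + 1 + 2 * m)
    (ω : F4) (hω : ω ^ 2 + ω + 1 = 0)
    (r : Fin (2 * s + 1) → Fin n → F4)
    (hr : ∀ i : Fin (2 * s + 1), (i : ℕ) < 2 * s →
      r i = fun j : Fin n => if (j : ℕ) / 4 = (i : ℕ) then 1 else 0)
    (hrlast : ∀ i : Fin (2 * s + 1), (i : ℕ) = 2 * s →
      r i = fun j : Fin n => if (j : ℕ) < 8 * s then
        (if (j : ℕ) % 4 = 0 then 0 else if (j : ℕ) % 4 = 1 then 1 else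
         if (j : ℕ) % 4 = 2 then ω else ω ^ 2)
        else 1) :
    let C := Submodule.span F4 (Set.range r)
    let R := C.restrictScalars F2 ⊓ trDualSub (C : Set (Fin n → F4))
    Module.finrank F4 C = 2 * s + 1 ∧
    (∀ v ∈ C, v ≠ 0 → 4 ≤ wt v) ∧ (∃ v ∈ C, v ≠ 0 ∧ wt v = 4) ∧
    R = (Submodule.span F4 (r '' {i | (i : ℕ) < 2 * s})).restrictScalars F2 ∧
    Module.finrank F2 R = 4 * s ∧
    (∀ v ∈ C, v ∉ R → wt v = n - 2 * s) ∧
    ((C : Set (Fin n → F4)) \ (R : Set (Fin n → F4))).ncard = 3 * 4 ^ (2 * s) := by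
  intro C R
  classical
  have hsn : 8 * s < n := by omega
  have h2 : (2 : F4) = 0 := h2F4
  have hev := eval_sum s n hsn ω r hr hrlast
  have hmemC : ∀ v, v ∈ C ↔ ∃ c : Fin (2 * s + 1) → F4, ∑ i, c i • r i = v :=
    fun v => Submodule.mem_span_range_iff_exists_fun F4
  -- linear independence
  have hind : LinearIndependent F4 r := by
    rw [Fintype.linearIndependent_iff]
    intro c hc
    have hb : c (Fin.last (2 * s)) = 0 := by
      have h8 := congrFun hc ⟨8 * s, by omega⟩
      rw [hev c ⟨8 * s, by omega⟩] at h8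
      rw [vfun, if_neg (by simp)] at h8
      simpa using h8
    intro i
    by_cases hi : (i : ℕ) < 2 * s
    · have h4 := congrFun hc ⟨4 * (i : ℕ), by omega⟩
      rw [hev c ⟨4 * (i : ℕ), by omega⟩] at h4
      rw [vfun, show ((⟨4 * (i : ℕ), by omega⟩ : Fin n) : ℕ) = 4 * (i : ℕ) from rfl,
        if_pos (by omega), show (4 * (i : ℕ)) / 4 = (i : ℕ) by omega,
        show (4 * (i : ℕ)) % 4 = 0 by omega] at h4
      rw [cext, dif_pos (by omega)] at h4
      rw [show Dv ω 0 = (0 : F4) from rfl, mul_zero, add_zero] at h4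
      simp only [Pi.zero_apply] at h4
      rwa [show (⟨(i : ℕ), by omega⟩ : Fin (2 * s + 1)) = i from Fin.ext rfl] at h4
    · rwa [show i = Fin.last (2 * s) from Fin.ext (by simp; omega)]
  -- rank of C
  have hrankC : Module.finrank F4 C = 2 * s + 1 :=
    (finrank_span_eq_card hind).trans (by simp)
  -- description of R0
  set R0 := Submodule.span F4 (r '' {i | (i : ℕ) < 2 * s}) with hR0def
  have himage : r '' {i | (i : ℕ) < 2 * s}
      = Set.range (fun i : Fin (2 * s) => r i.castSucc) := by
    ext v
    constructor
    · rintro ⟨i, hi, rfl⟩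
      exact ⟨⟨(i : ℕ), hi⟩, congrArg r (Fin.ext rfl)⟩
    · rintro ⟨i, rfl⟩
      exact ⟨i.castSucc, by simpa using i.isLt, rfl⟩
  have hmemR0 : ∀ v, v ∈ R0 ↔
      ∃ c : Fin (2 * s + 1) → F4, c (Fin.last (2 * s)) = 0 ∧ ∑ i, c i • r i = v := by
    intro v
    rw [hR0def, himage, Submodule.mem_span_range_iff_exists_fun]
    constructor
    · rintro ⟨c', rfl⟩
      refine ⟨Fin.snoc c' 0, by simp, ?_⟩
      rw [Fin.sum_univ_castSucc]
      simp [Fin.snoc_castSucc, Fin.snoc_last]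
    · rintro ⟨c, hc0, rfl⟩
      refine ⟨fun i => c i.castSucc, ?_⟩
      conv_rhs => rw [Fin.sum_univ_castSucc]
      rw [hc0, zero_smul, add_zero]
  have hlastC : r (Fin.last (2 * s)) ∈ C := Submodule.subset_span ⟨_, rfl⟩
  have homlastC : ω • r (Fin.last (2 * s)) ∈ C := Submodule.smul_mem _ ω hlastC
  have hd1 : ∑ i, Pi.single (M := fun _ => F4) (Fin.last (2 * s)) (1 : F4) i • r i
      = r (Fin.last (2 * s)) := by
    simp [Pi.single_apply, ite_smul, Finset.sum_ite_eq']
  have hd2 : ∑ i, Pi.single (M := fun _ => F4) (Fin.last (2 * s)) ω i • r i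
      = ω • r (Fin.last (2 * s)) := by
    simp [Pi.single_apply, ite_smul, Finset.sum_ite_eq']
  -- R = R0
  have hRiff : ∀ v, v ∈ R ↔ v ∈ R0 := by
    intro v
    constructor
    · intro hvR
      obtain ⟨hvC, hvD⟩ := Submodule.mem_inf.mp hvR
      rw [Submodule.restrictScalars_mem] at hvC
      obtain ⟨c, rfl⟩ := (hmemC _).mp hvC
      have htr1 := hvD _ hlastC
      have htr2 := hvD _ homlastC
      rw [← hd1, trInner_formula s m n hn ω hω r hr hrlast] at htr1
      rw [← hd2, trInner_formula s m n hn ω hω r hr hrlast] at htr2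
      rw [Pi.single_eq_same] at htr1
      rw [Pi.single_eq_same] at htr2
      set b := c (Fin.last (2 * s)) with hbdef
      have hb0 : b = 0 := by
        rcases F4cases ω hω b with h | h | h | h
        · exact h
        · rw [h] at htr2
          exact absurd (show (1 : F4) = 0 by linear_combination hω - htr2) one_ne_zero
        · rw [h] at htr1
          exact absurd (show (1 : F4) = 0 by linear_combination hω - htr1) one_ne_zero
        · rw [h] at htr1
          exact absurd (show (1 : F4) = 0 by
            linear_combination hω - htr1 + (ω ^ 2 - ω) * hω) one_ne_zero
      exact (hmemR0 _).mpr ⟨c, hb0, rfl⟩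
    · intro hvR0
      obtain ⟨c, hc0, rfl⟩ := (hmemR0 _).mp hvR0
      refine Submodule.mem_inf.mpr ⟨?_, ?_⟩
      · rw [Submodule.restrictScalars_mem]
        exact (hmemC _).mpr ⟨c, rfl⟩
      · intro w hw
        obtain ⟨d, rfl⟩ := (hmemC _).mp hw
        rw [trInner_formula s m n hn ω hω r hr hrlast, hc0]
        ring
  have hReq : R = R0.restrictScalars F2 := by
    ext v
    rw [Submodule.restrictScalars_mem]
    exact hRiff v
  -- rank of R
  have hind2 : LinearIndependent F4 (fun i : Fin (2 * s) => r i.castSucc) :=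
    hind.comp _ (Fin.castSucc_injective _)
  have hrankR0 : Module.finrank F4 R0 = 2 * s := by
    rw [hR0def, himage]
    exact (finrank_span_eq_card hind2).trans (by simp)
  have hrankR : Module.finrank F2 R = 4 * s := by
    rw [hReq]
    have e : (↥(R0.restrictScalars F2)) ≃ₗ[F2] ↥R0 :=
      (Submodule.restrictScalarsEquiv F2 F4 _ R0).restrictScalars F2
    rw [e.finrank_eq]
    have := Module.finrank_mul_finrank F2 F4 ↥R0
    rw [GaloisField.finrank 2 (by norm_num), hrankR0] at this
    omega
  -- weight of C \ R elements
  have hwtCR : ∀ v ∈ C, v ∉ R → wt v = n - 2 * s := by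
    intro v hvC hvR
    obtain ⟨c, rfl⟩ := (hmemC _).mp hvC
    by_cases hb : c (Fin.last (2 * s)) = 0
    · exact absurd ((hRiff _).mpr ((hmemR0 _).mpr ⟨c, hb, rfl⟩)) hvR
    · exact wt_blast_ne s m n hn ω hω r hr hrlast c hb
  -- minimum weight
  have hmin : ∀ v ∈ C, v ≠ 0 → 4 ≤ wt v := by
    intro v hvC hv0
    obtain ⟨c, rfl⟩ := (hmemC _).mp hvC
    by_cases hb : c (Fin.last (2 * s)) = 0
    · exact wt_blast_zero s m n hn ω r hr hrlast c hb hv0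
    · rw [wt_blast_ne s m n hn ω hω r hr hrlast c hb]; omega
  obtain ⟨hwt4, hne4⟩ := wt_r0 s m n hn hs ω r hr
  -- cardinality
  have hcarddiff :
      ((C : Set (Fin n → F4)) \ (R : Set (Fin n → F4))).ncard = 3 * 4 ^ (2 * s) := by
    letI : Fintype F4 := Fintype.ofFinite F4
    letI : Fintype ↥C := Fintype.ofFinite _
    letI : Fintype ↥R := Fintype.ofFinite _
    have hsub : (R : Set (Fin n → F4)) ⊆ (C : Set (Fin n → F4)) := by
      intro x hx
      have := (Submodule.mem_inf.mp hx).1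
      rwa [Submodule.restrictScalars_mem] at this
    rw [Set.ncard_diff hsub]
    have hCnat : Nat.card ↥C = 4 ^ (2 * s + 1) := by
      rw [Nat.card_eq_fintype_card, Module.card_eq_pow_finrank (K := F4) (V := ↥C), hrankC]
      congr 1
      rw [← Nat.card_eq_fintype_card]
      exact GaloisField.card 2 2 (by norm_num)
    have hRnat : Nat.card ↥R = 2 ^ (4 * s) := by
      rw [Nat.card_eq_fintype_card, Module.card_eq_pow_finrank (K := F2) (V := ↥R), hrankR]
      congr 1
    have hCcard : (C : Set (Fin n → F4)).ncard = 4 ^ (2 * s + 1) := by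
      rw [← Nat.card_coe_set_eq]; exact hCnat
    have hRcard : (R : Set (Fin n → F4)).ncard = 2 ^ (4 * s) := by
      rw [← Nat.card_coe_set_eq]; exact hRnat
    rw [hCcard, hRcard]
    have h24 : (2 : ℕ) ^ (4 * s) = 4 ^ (2 * s) := by
      rw [show (4 : ℕ) = 2 ^ 2 from rfl, ← pow_mul]
      congr 1
      omega
    rw [h24, pow_succ]
    have hpos : 0 < (4 : ℕ) ^ (2 * s) := by positivity
    omega
  exact ⟨hrankC, hmin, ⟨r ⟨0, by omega⟩, Submodule.subset_span ⟨_, rfl⟩, hne4, hwt4⟩,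
    hReq, hrankR, hwtCR, hcarddiff⟩
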